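/- With the setup of the adjunction system e_i n_i = q_i + Σ_{j≠i} e_{ij} n_j with negative definite intersection form: if a vertex i satisfies n_i ≠ 0 for every solution (n, e) of the system, then e_i takes only finitely many values among all solutions. -/

import Mathlib

open Finset

private lemma nat_mono_subseq (f : ℕ → ℕ) :
    ∃ g : ℕ → ℕ, StrictMono g ∧ Monotone (f ∘ g) := by
  obtain ⟨g, hg⟩ := ((Set.isWF_univ_iff.mpr (inferInstance : WellFoundedLT ℕ)).isPWO).exists_monotone_subseq (f := f)
    (fun n => Set.mem_univ _)
  exact ⟨g, g.strictMono, hg⟩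

private lemma pi_mono_subseq {V : Type*} [DecidableEq V] (s : Finset V) (f : ℕ → V → ℕ) :
    ∃ g : ℕ → ℕ, StrictMono g ∧ ∀ v ∈ s, Monotone (fun k => f (g k) v) := by
  induction s using Finset.induction_on with
  | empty => exact ⟨id, strictMono_id, by simp⟩
  | @insert a s ha ih =>
    obtain ⟨g₁, hg₁, hmono⟩ := ih
    obtain ⟨g₂, hg₂, hmono₂⟩ := nat_mono_subseq (fun k => f (g₁ k) a)
    refine ⟨g₁ ∘ g₂, hg₁.comp hg₂, ?_⟩
    intro v hv
    rcases Finset.mem_insert.mp hv with rfl | hv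
    · exact hmono₂
    · exact (hmono v hv).comp hg₂.monotone

private def quadP {V : Type*} [Fintype V] [DecidableEq V] (w : V → V → ℕ) (E : V → ℕ)
    (x : V → ℝ) : ℝ :=
  (∑ j, (E j : ℝ) * x j ^ 2) - ∑ j, x j * ∑ k ∈ univ.erase j, (w j k : ℝ) * x k

private lemma quadP_eq {V : Type*} [Fintype V] [DecidableEq V] (w : V → V → ℕ) (E : V → ℕ)
    (x : V → ℝ) :
    (∑ j, x j * (-(E j : ℝ) * x j + ∑ k ∈ univ.erase j, (w j k : ℝ) * x k)) = - quadP w E x := by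
  unfold quadP
  rw [neg_sub, ← Finset.sum_sub_distrib]
  exact Finset.sum_congr rfl fun j _ => by ring

private lemma quadP_mono {V : Type*} [Fintype V] [DecidableEq V] (w : V → V → ℕ)
    (E E' : V → ℕ) (x : V → ℝ) (hE : ∀ j, E j ≤ E' j) : quadP w E x ≤ quadP w E' x := by
  unfold quadP
  have : (∑ j, (E j : ℝ) * x j ^ 2) ≤ ∑ j, (E' j : ℝ) * x j ^ 2 :=
    Finset.sum_le_sum fun j _ =>
      mul_le_mul_of_nonneg_right (by exact_mod_cast hE j) (sq_nonneg _)
  linarith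

private lemma quadP_smul {V : Type*} [Fintype V] [DecidableEq V] (w : V → V → ℕ) (E : V → ℕ)
    (c : ℝ) (x : V → ℝ) : quadP w E (c • x) = c ^ 2 * quadP w E x := by
  unfold quadP
  rw [mul_sub, Finset.mul_sum, Finset.mul_sum]
  congr 1
  · refine Finset.sum_congr rfl fun j _ => ?_
    simp only [Pi.smul_apply, smul_eq_mul]
    ring
  · refine Finset.sum_congr rfl fun j _ => ?_
    have hinner : ∑ k ∈ univ.erase j, (w j k : ℝ) * (c • x) k
        = c * ∑ k ∈ univ.erase j, (w j k : ℝ) * x k := by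
      rw [Finset.mul_sum]
      exact Finset.sum_congr rfl fun k _ => by simp only [Pi.smul_apply, smul_eq_mul]; ring
    rw [hinner]
    simp only [Pi.smul_apply, smul_eq_mul]
    ring

private lemma quadP_zero {V : Type*} [Fintype V] [DecidableEq V] (w : V → V → ℕ) (E : V → ℕ) :
    quadP w E 0 = 0 := by
  simp [quadP]

private lemma quadP_continuous {V : Type*} [Fintype V] [DecidableEq V] (w : V → V → ℕ)
    (E : V → ℕ) : Continuous (quadP w E) := by
  unfold quadP
  apply Continuous.sub
  · exact continuous_finset_sum _ fun j _ => continuous_const.mul ((continuous_apply j).pow 2)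
  · exact continuous_finset_sum _ fun j _ => (continuous_apply j).mul
      (continuous_finset_sum _ fun k _ => continuous_const.mul (continuous_apply k))

private lemma quadP_lower {V : Type*} [Fintype V] [DecidableEq V] [Nonempty V]
    (w : V → V → ℕ) (E : V → ℕ) (hPD : ∀ x : V → ℝ, x ≠ 0 → 0 < quadP w E x) :
    ∃ lam : ℝ, 0 < lam ∧ ∀ x : V → ℝ, lam * ‖x‖ ^ 2 ≤ quadP w E x := by
  have hsph : (Metric.sphere (0 : V → ℝ) 1).Nonempty :=
    NormedSpace.sphere_nonempty.mpr zero_le_one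
  obtain ⟨x₀, hx₀, hmin⟩ := (isCompact_sphere (0 : V → ℝ) 1).exists_isMinOn hsph
    (quadP_continuous w E).continuousOn
  have hx₀norm : ‖x₀‖ = 1 := by simpa using hx₀
  have hx₀ne : x₀ ≠ 0 := by
    intro h0
    rw [h0] at hx₀norm
    simp at hx₀norm
  refine ⟨quadP w E x₀, hPD x₀ hx₀ne, fun x => ?_⟩
  rcases eq_or_ne x 0 with rfl | hx
  · simp [quadP_zero]
  · have hxn : (0 : ℝ) < ‖x‖ := norm_pos_iff.mpr hx
    set u : V → ℝ := ‖x‖⁻¹ • x with hu_def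
    have hu : ‖u‖ = 1 := by
      rw [hu_def, norm_smul, norm_inv, norm_norm, inv_mul_cancel₀ hxn.ne']
    have humem : u ∈ Metric.sphere (0 : V → ℝ) 1 := by
      simpa [Metric.mem_sphere, dist_zero_right] using hu
    have hle : quadP w E x₀ ≤ quadP w E u := isMinOn_iff.mp hmin u humem
    have hsmul : quadP w E u = (‖x‖⁻¹) ^ 2 * quadP w E x := quadP_smul w E (‖x‖⁻¹) x
    rw [hsmul] at hle
    have h2 : ‖x‖ ^ 2 * quadP w E x₀ ≤ ‖x‖ ^ 2 * ((‖x‖⁻¹) ^ 2 * quadP w E x) :=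
      mul_le_mul_of_nonneg_left hle (by positivity)
    have h3 : ‖x‖ ^ 2 * ((‖x‖⁻¹) ^ 2 * quadP w E x) = quadP w E x := by
      field_simp
    rw [h3] at h2
    linarith

/-- If a vertex `i` satisfies `n i ≠ 0` for every solution of the adjunction system
with negative definite intersection form, then `e i` takes only finitely many values
among all such solutions. -/
theorem stmt_1 {V : Type*} [Fintype V] [DecidableEq V]
    (w : V → V → ℕ) (hsymm : ∀ i j, w i j = w j i) (hdiag : ∀ i, w i i = 0)
    (hconn : (SimpleGraph.fromRel (fun i j => 0 < w i j)).Connected)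
    (q : V → ℤ) (i : V)
    (h : ∀ n e : V → ℕ, (∀ j, 1 ≤ e j) →
      (∀ j, (e j : ℤ) * n j = q j + ∑ k ∈ univ.erase j, (w j k : ℤ) * n k) →
      (∀ x : V → ℝ, x ≠ 0 →
        ∑ j, x j * (-(e j : ℝ) * x j + ∑ k ∈ univ.erase j, (w j k : ℝ) * x k) < 0) →
      n i ≠ 0) :
    {m : ℕ | ∃ n e : V → ℕ, (∀ j, 1 ≤ e j) ∧
      (∀ j, (e j : ℤ) * n j = q j + ∑ k ∈ univ.erase j, (w j k : ℤ) * n k) ∧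
      (∀ x : V → ℝ, x ≠ 0 →
        ∑ j, x j * (-(e j : ℝ) * x j + ∑ k ∈ univ.erase j, (w j k : ℝ) * x k) < 0) ∧
      e i = m}.Finite := by
  have hne : Nonempty V := ⟨i⟩
  rw [Set.finite_iff_bddAbove]
  by_contra hbdd
  rw [not_bddAbove_iff] at hbdd
  have key : ∀ K : ℕ, ∃ n e : V → ℕ, (∀ j, 1 ≤ e j) ∧
      (∀ j, (e j : ℤ) * n j = q j + ∑ k ∈ univ.erase j, (w j k : ℤ) * n k) ∧
      (∀ x : V → ℝ, x ≠ 0 →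
        ∑ j, x j * (-(e j : ℝ) * x j + ∑ k ∈ univ.erase j, (w j k : ℝ) * x k) < 0) ∧
      K < e i := by
    intro K
    obtain ⟨m, ⟨n, e, h1, h2, h3, rfl⟩, hK⟩ := hbdd K
    exact ⟨n, e, h1, h2, h3, hK⟩
  choose n e h1 h2 h3 h4 using key
  have h3' : ∀ m : ℕ, ∀ x : V → ℝ, x ≠ 0 → 0 < quadP w (e m) x := by
    intro m x hx
    have := h3 m x hx
    rw [quadP_eq w (e m) x] at this
    linarith
  obtain ⟨g, hg, hmono⟩ := pi_mono_subseq (univ : Finset V) e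
  obtain ⟨lam, hlam, hlow⟩ := quadP_lower w (e (g 0)) (h3' (g 0))
  set Q1 : ℝ := ∑ j, |(q j : ℝ)| with hQ1
  have hQ1nonneg : 0 ≤ Q1 := Finset.sum_nonneg fun j _ => abs_nonneg _
  -- uniform bound on the n's along the subsequence
  have hbound : ∀ K : ℕ, ∀ v : V, ((n (g K) v : ℝ)) ≤ Q1 / lam := by
    intro K v
    set N : V → ℝ := fun j => (n (g K) j : ℝ) with hN
    have hNnonneg : ∀ j, 0 ≤ N j := fun j => Nat.cast_nonneg _
    have hval : quadP w (e (g K)) N = ∑ j, (q j : ℝ) * N j := by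
      unfold quadP
      rw [← Finset.sum_sub_distrib]
      refine Finset.sum_congr rfl fun j _ => ?_
      have hz := h2 (g K) j
      have hcast := congrArg (fun z : ℤ => (z : ℝ)) hz
      push_cast at hcast
      simp only [hN]
      linear_combination (n (g K) j : ℝ) * hcast
    have hmonoP : quadP w (e (g 0)) N ≤ quadP w (e (g K)) N :=
      quadP_mono w _ _ N fun j => (hmono j (Finset.mem_univ j)) (Nat.zero_le K)
    have hup : (∑ j, (q j : ℝ) * N j) ≤ Q1 * ‖N‖ := by
      rw [hQ1, Finset.sum_mul]
      refine Finset.sum_le_sum fun j _ => ?_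
      have hNj : N j ≤ ‖N‖ := by
        have := norm_le_pi_norm N j
        rwa [Real.norm_eq_abs, abs_of_nonneg (hNnonneg j)] at this
      have h1' : (q j : ℝ) * N j ≤ |(q j : ℝ)| * N j :=
        mul_le_mul_of_nonneg_right (le_abs_self _) (hNnonneg j)
      have h2' : |(q j : ℝ)| * N j ≤ |(q j : ℝ)| * ‖N‖ :=
        mul_le_mul_of_nonneg_left hNj (abs_nonneg _)
      linarith
    have hchain : lam * ‖N‖ ^ 2 ≤ Q1 * ‖N‖ := by
      have := hlow N
      rw [hval] at hmonoP
      linarith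
    have hnormN : ‖N‖ ≤ Q1 / lam := by
      have ht : 0 ≤ ‖N‖ := norm_nonneg N
      rcases ht.eq_or_lt with h0 | h0
      · rw [← h0]; positivity
      · rw [le_div_iff₀ hlam]
        nlinarith
    have hNv : N v ≤ ‖N‖ := by
      have := norm_le_pi_norm N v
      rwa [Real.norm_eq_abs, abs_of_nonneg (hNnonneg v)] at this
    calc ((n (g K) v : ℝ)) = N v := rfl
      _ ≤ ‖N‖ := hNv
      _ ≤ Q1 / lam := hnormN
  -- now bound e i along the subsequence
  set B : ℝ := (q i : ℝ) + (∑ k ∈ univ.erase i, (w i k : ℝ)) * (Q1 / lam) with hB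
  obtain ⟨K, hK⟩ := exists_nat_gt B
  have hni : 1 ≤ n (g K) i :=
    Nat.one_le_iff_ne_zero.mpr (h (n (g K)) (e (g K)) (h1 (g K)) (h2 (g K)) (h3 (g K)))
  have hei : ((e (g K) i : ℝ)) ≤ B := by
    have step1 : ((e (g K) i : ℝ)) ≤ (e (g K) i : ℝ) * (n (g K) i : ℝ) := by
      have : (1 : ℝ) ≤ (n (g K) i : ℝ) := by exact_mod_cast hni
      exact le_mul_of_one_le_right (by positivity) this
    have hz := h2 (g K) i
    have hcast := congrArg (fun z : ℤ => (z : ℝ)) hz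
    push_cast at hcast
    have step2 : (∑ k ∈ univ.erase i, (w i k : ℝ) * (n (g K) k : ℝ))
        ≤ ∑ k ∈ univ.erase i, (w i k : ℝ) * (Q1 / lam) :=
      Finset.sum_le_sum fun k _ =>
        mul_le_mul_of_nonneg_left (hbound K k) (Nat.cast_nonneg _)
    have step3 : (∑ k ∈ univ.erase i, (w i k : ℝ) * (Q1 / lam))
        = (∑ k ∈ univ.erase i, (w i k : ℝ)) * (Q1 / lam) := by
      rw [Finset.sum_mul]
    rw [hB]
    calc ((e (g K) i : ℝ)) ≤ (e (g K) i : ℝ) * (n (g K) i : ℝ) := step1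
      _ = (q i : ℝ) + ∑ k ∈ univ.erase i, (w i k : ℝ) * (n (g K) k : ℝ) := hcast
      _ ≤ (q i : ℝ) + ∑ k ∈ univ.erase i, (w i k : ℝ) * (Q1 / lam) := by linarith
      _ = (q i : ℝ) + (∑ k ∈ univ.erase i, (w i k : ℝ)) * (Q1 / lam) := by rw [step3]
  have hKe : K < e (g K) i := lt_of_le_of_lt hg.le_apply (h4 (g K))
  have : (K : ℝ) < (e (g K) i : ℝ) := by exact_mod_cast hKe
  linarith
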